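/- Suppose at x = X: P_x(X) = 0, u_x(X) < 0, u_xx < 0 on a left neighborhood of X, and (Γ_x - b_x)_x < 0 on a left neighborhood of X, with Γ - b > 0. Then there exists ε₀ > 0 such that P_x(X - ε) > 0 for all 0 < ε < ε₀. -/

import Mathlib

open Set

/-- crest side: if `P_x(X) = 0`, `u_x(X) < 0`, and both `u_xx < 0`
and `(Γ_x - b_x)_x < 0` on a left neighborhood of `X`, then `P_x(X-ε) > 0` for
all small `ε > 0`. -/
theorem crest_side_positive
    (u Γ b Px : ℝ → ℝ) (X : ℝ) (s : Set ℝ)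
    (hs : IsOpen s) (hX : X ∈ s)
    (hu : ContDiffOn ℝ 2 u s) (hΓ : ContDiffOn ℝ 2 Γ s) (hb : ContDiffOn ℝ 2 b s)
    (hpos : ∀ x ∈ s, Γ x - b x > 0)
    (hPx : ∀ x ∈ s, Px x =
      deriv u x + (deriv Γ x - deriv b x) / Real.sqrt (Γ x - b x))
    (h0 : Px X = 0)
    (hux : deriv u X < 0)
    (η : ℝ) (hη : 0 < η) (hηs : Ioo (X - η) X ⊆ s)
    (huxx : ∀ x ∈ Ioo (X - η) X, deriv (deriv u) x < 0)
    (hslope : ∀ x ∈ Ioo (X - η) X, deriv (fun y => deriv Γ y - deriv b y) x < 0) :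
    ∃ ε₀ > 0, ∀ ε : ℝ, 0 < ε → ε < ε₀ → Px (X - ε) > 0 := by
  set g : ℝ → ℝ := fun y => deriv Γ y - deriv b y with hgdef
  have le2 : (1 : WithTop ℕ∞) ≤ 2 := by norm_num
  have hΓ' : ContinuousOn (deriv Γ) s := hΓ.continuousOn_deriv_of_isOpen hs le2
  have hb' : ContinuousOn (deriv b) s := hb.continuousOn_deriv_of_isOpen hs le2
  have hu' : ContinuousOn (deriv u) s := hu.continuousOn_deriv_of_isOpen hs le2
  have hgc : ContinuousOn g s := hΓ'.sub hb'
  have hhX : 0 < Γ X - b X := hpos X hX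
  have hsX : 0 < Real.sqrt (Γ X - b X) := Real.sqrt_pos.2 hhX
  have hPX := hPx X hX
  rw [h0] at hPX
  have hdivX : 0 < g X / Real.sqrt (Γ X - b X) := by
    simp only [hgdef]; linarith
  have hgX : 0 < g X := by
    rcases div_pos_iff.mp hdivX with ⟨h, _⟩ | ⟨_, h⟩
    · exact h
    · linarith
  -- radius inside s
  obtain ⟨r1, hr1, hball⟩ := Metric.isOpen_iff.mp hs X hX
  -- radius where g > 0
  have hge : ∀ᶠ y in nhds X, 0 < g y :=
    (hgc.continuousAt (hs.mem_nhds hX)).eventually (eventually_gt_nhds hgX)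
  obtain ⟨r2, hr2, hr2'⟩ := Metric.eventually_nhds_iff.mp hge
  refine ⟨min (min r1 η) r2, by positivity, ?_⟩
  intro ε hε hεlt
  set x := X - ε with hxdef
  have hεr1 : ε < r1 := lt_of_lt_of_le hεlt (le_trans (min_le_left _ _) (min_le_left _ _))
  have hεη : ε < η := lt_of_lt_of_le hεlt (le_trans (min_le_left _ _) (min_le_right _ _))
  have hεr2 : ε < r2 := lt_of_lt_of_le hεlt (min_le_right _ _)
  have hxX : x < X := by simp [hxdef]; linarith
  have hIcc_s : Icc x X ⊆ s := by
    intro y hy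
    apply hball
    rw [Metric.mem_ball, Real.dist_eq, abs_of_nonpos (by linarith [hy.2])]
    have := hy.1
    simp only [hxdef] at this
    linarith
  have hIoo_η : Ioo x X ⊆ Ioo (X - η) X := by
    intro y hy
    exact ⟨by have := hy.1; simp only [hxdef] at this; linarith, hy.2⟩
  have hx_s : x ∈ s := hIcc_s ⟨le_rfl, hxX.le⟩
  have hxmem : x ∈ Icc x X := ⟨le_rfl, hxX.le⟩
  have hXmem : X ∈ Icc x X := ⟨hxX.le, le_rfl⟩
  -- deriv u strictly decreasing
  have hA : StrictAntiOn (deriv u) (Icc x X) := by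
    apply strictAntiOn_of_deriv_neg (convex_Icc _ _) (hu'.mono hIcc_s)
    intro y hy
    rw [interior_Icc] at hy
    exact huxx y (hIoo_η hy)
  -- g strictly decreasing
  have hB : StrictAntiOn g (Icc x X) := by
    apply strictAntiOn_of_deriv_neg (convex_Icc _ _) (hgc.mono hIcc_s)
    intro y hy
    rw [interior_Icc] at hy
    exact hslope y (hIoo_η hy)
  -- Γ - b strictly increasing
  have hC : StrictMonoOn (fun y => Γ y - b y) (Icc x X) := by
    apply strictMonoOn_of_deriv_pos (convex_Icc _ _)
      ((hΓ.continuousOn.sub hb.continuousOn).mono hIcc_s)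
    intro y hy
    rw [interior_Icc] at hy
    have hy_s : y ∈ s := hIcc_s (Ioo_subset_Icc_self hy)
    have hdΓ : DifferentiableAt ℝ Γ y :=
      (hΓ.differentiableOn (by norm_num)).differentiableAt (hs.mem_nhds hy_s)
    have hdb : DifferentiableAt ℝ b y :=
      (hb.differentiableOn (by norm_num)).differentiableAt (hs.mem_nhds hy_s)
    rw [deriv_sub hdΓ hdb]
    apply hr2'
    rw [Real.dist_eq, abs_of_nonpos (by linarith [hy.2])]
    have := hy.1
    simp only [hxdef] at this
    linarith
  have h1 : deriv u X < deriv u x := hA hxmem hXmem hxX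
  have h2 : g X < g x := hB hxmem hXmem hxX
  have h3 : Γ x - b x < Γ X - b X := hC hxmem hXmem hxX
  have h4 : 0 < Γ x - b x := hpos x hx_s
  have h5 : Real.sqrt (Γ x - b x) < Real.sqrt (Γ X - b X) :=
    Real.sqrt_lt_sqrt h4.le h3
  have h6 : 0 < Real.sqrt (Γ x - b x) := Real.sqrt_pos.2 h4
  have h7 : g X / Real.sqrt (Γ X - b X) < g x / Real.sqrt (Γ x - b x) := by
    calc g X / Real.sqrt (Γ X - b X) < g X / Real.sqrt (Γ x - b x) := by
          exact div_lt_div_of_pos_left hgX h6 h5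
      _ < g x / Real.sqrt (Γ x - b x) := by
          exact div_lt_div_of_pos_right h2 h6
  rw [hPx x hx_s]
  simp only [hgdef] at h7
  linarith
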